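/- Let t, a, b, p, q, k ∈ ℂ with t ≠ 0, and let c be the braiding of type R_{1,2} on V = ℂ³ with parameters t, a, b, p, q, k. Then the kernel of id_{V⊗V} + c is nonzero if and only if t² = 1. (Equivalently, the Nichols algebra of (V, c) has quadratic relations if and only if t² = 1.) -/

import Mathlib

open TensorProduct

/-- `V = ℂ³`. -/
abbrev V3 : Type := Fin 3 → ℂ

/-- The standard basis vectors `x₁ = xv 0`, `x₂ = xv 1`, `x₃ = xv 2` of `ℂ³`. -/
noncomputable def xv (i : Fin 3) : V3 := Pi.single i 1

noncomputable def BB : Module.Basis (Fin 3 × Fin 3) ℂ (V3 ⊗[ℂ] V3) :=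
  (Pi.basisFun ℂ (Fin 3)).tensorProduct (Pi.basisFun ℂ (Fin 3))

lemma BB_apply (i j : Fin 3) : BB (i, j) = xv i ⊗ₜ[ℂ] xv j := by
  simp [BB, Module.Basis.tensorProduct_apply, xv, Pi.basisFun_apply]

/-- for the braiding `c` of type `R_{1,2}` on `ℂ³` with parameters
`t ≠ 0, a, b, p, q, k`, the kernel of `id + c` is nonzero iff `t² = 1`. -/
theorem quadratic_relations_R12_iff (t a b p q k : ℂ) (ht : t ≠ 0)
    (c : V3 ⊗[ℂ] V3 →ₗ[ℂ] V3 ⊗[ℂ] V3)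
    (h11 : c (xv 0 ⊗ₜ[ℂ] xv 0) = t • (xv 0 ⊗ₜ[ℂ] xv 0))
    (h21 : c (xv 1 ⊗ₜ[ℂ] xv 0) = t • (xv 0 ⊗ₜ[ℂ] xv 1))
    (h31 : c (xv 2 ⊗ₜ[ℂ] xv 0) = t • (xv 0 ⊗ₜ[ℂ] xv 2) + (t * b) • (xv 0 ⊗ₜ[ℂ] xv 0))
    (h12 : c (xv 0 ⊗ₜ[ℂ] xv 1) = t • (xv 1 ⊗ₜ[ℂ] xv 0))
    (h22 : c (xv 1 ⊗ₜ[ℂ] xv 1) = t • (xv 1 ⊗ₜ[ℂ] xv 1))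
    (h32 : c (xv 2 ⊗ₜ[ℂ] xv 1) = t • (xv 1 ⊗ₜ[ℂ] xv 2) + (t * b) • (xv 1 ⊗ₜ[ℂ] xv 0)
      + (t * (p - q)) • (xv 0 ⊗ₜ[ℂ] xv 1))
    (h13 : c (xv 0 ⊗ₜ[ℂ] xv 2) = t • (xv 2 ⊗ₜ[ℂ] xv 0) + (t * p) • (xv 0 ⊗ₜ[ℂ] xv 0))
    (h23 : c (xv 1 ⊗ₜ[ℂ] xv 2) = t • (xv 2 ⊗ₜ[ℂ] xv 1) + (t * q) • (xv 0 ⊗ₜ[ℂ] xv 1))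
    (h33 : c (xv 2 ⊗ₜ[ℂ] xv 2) = t • (xv 2 ⊗ₜ[ℂ] xv 2) + (t * b) • (xv 2 ⊗ₜ[ℂ] xv 0)
      + (t * p) • (xv 0 ⊗ₜ[ℂ] xv 2) - (t * k) • (xv 1 ⊗ₜ[ℂ] xv 0)
      + (t * k) • (xv 0 ⊗ₜ[ℂ] xv 1) + (t * a) • (xv 0 ⊗ₜ[ℂ] xv 0)) :
    LinearMap.ker (LinearMap.id + c) ≠ ⊥ ↔ t ^ 2 = 1 := by
  simp only [show ∀ i j : Fin 3, xv i ⊗ₜ[ℂ] xv j = BB (i, j) from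
    fun i j => (BB_apply i j).symm] at h11 h21 h31 h12 h22 h32 h13 h23 h33
  constructor
  · intro hker
    by_contra ht2
    have h1t : (1 : ℂ) + t ≠ 0 := fun h => ht2 (by linear_combination (t - 1) * h)
    have hne : (1 : ℂ) - t ^ 2 ≠ 0 := fun h => ht2 (by linear_combination -h)
    apply hker
    rw [Submodule.eq_bot_iff]
    intro v hv
    rw [LinearMap.mem_ker, LinearMap.add_apply, LinearMap.id_apply] at hv
    have hcv : c v = ∑ ij : Fin 3 × Fin 3, BB.repr v ij • c (BB ij) := by
      conv_lhs => rw [← BB.sum_repr v]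
      rw [map_sum]
      simp only [map_smul]
    have key : ∀ ab : Fin 3 × Fin 3,
        BB.repr v ab + ∑ ij : Fin 3 × Fin 3, BB.repr v ij • (BB.repr (c (BB ij)) ab) = 0 := by
      intro ab
      have h0 : BB.repr (v + c v) ab = 0 := by rw [hv]; simp
      rw [map_add, Finsupp.add_apply, hcv, map_sum, Finsupp.finset_sum_apply] at h0
      simpa using h0
    -- extract the nine equations
    have e00 := key (0, 0)
    have e01 := key (0, 1)
    have e02 := key (0, 2)
    have e10 := key (1, 0)
    have e11 := key (1, 1)
    have e12 := key (1, 2)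
    have e20 := key (2, 0)
    have e21 := key (2, 1)
    have e22 := key (2, 2)
    simp only [Fintype.sum_prod_type, Fin.sum_univ_three, h11, h21, h31, h12, h22, h32, h13,
      h23, h33, map_add, map_sub, map_smul, Module.Basis.repr_self, Finsupp.smul_apply,
      Finsupp.add_apply, Finsupp.sub_apply, Finsupp.single_apply, smul_eq_mul,
      Prod.mk.injEq, Fin.reduceEq, and_self, and_true, true_and, and_false, false_and,
      if_true, if_false, ite_true, ite_false, mul_zero, zero_mul, add_zero, zero_add,
      mul_one, one_mul, sub_zero, zero_sub] at e00 e01 e02 e10 e11 e12 e20 e21 e22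
    have l22 : BB.repr v (2, 2) = 0 := by
      rcases mul_eq_zero.mp (show BB.repr v (2, 2) * (1 + t) = 0 by linear_combination e22)
        with h | h
      · exact h
      · exact absurd h h1t
    have l11 : BB.repr v (1, 1) = 0 := by
      rcases mul_eq_zero.mp (show BB.repr v (1, 1) * (1 + t) = 0 by linear_combination e11)
        with h | h
      · exact h
      · exact absurd h h1t
    have l12 : BB.repr v (1, 2) = 0 := by
      rcases mul_eq_zero.mp (show BB.repr v (1, 2) * (1 - t ^ 2) = 0 by
        linear_combination e12 - t * e21) with h | h
      · exact h
      · exact absurd h hne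
    have l21 : BB.repr v (2, 1) = 0 := by linear_combination e21 - t * l12
    have l02 : BB.repr v (0, 2) = 0 := by
      rcases mul_eq_zero.mp (show BB.repr v (0, 2) * (1 - t ^ 2) = 0 by
        linear_combination e02 - t * e20 + (t ^ 2 * b - t * p) * l22) with h | h
      · exact h
      · exact absurd h hne
    have l20 : BB.repr v (2, 0) = 0 := by linear_combination e20 - t * l02 - (t * b) * l22
    have l01 : BB.repr v (0, 1) = 0 := by
      rcases mul_eq_zero.mp (show BB.repr v (0, 1) * (1 - t ^ 2) = 0 by
        linear_combination e01 - t * e10 - (t * q) * l12 - (t * (p - q) - t ^ 2 * b) * l21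
          - (t * k + t ^ 2 * k) * l22) with h | h
      · exact h
      · exact absurd h hne
    have l10 : BB.repr v (1, 0) = 0 := by
      linear_combination e10 - t * l01 - (t * b) * l21 + (t * k) * l22
    have l00 : BB.repr v (0, 0) = 0 := by
      rcases mul_eq_zero.mp (show BB.repr v (0, 0) * (1 + t) = 0 by
        linear_combination e00 - (t * p) * l02 - (t * b) * l20 - (t * a) * l22) with h | h
      · exact h
      · exact absurd h h1t
    refine (Module.Basis.forall_coord_eq_zero_iff BB).mp ?_
    intro ij
    fin_cases ij <;> simp only [Module.Basis.coord_apply] <;>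
      first
        | exact l00 | exact l01 | exact l02 | exact l10 | exact l11 | exact l12
        | exact l20 | exact l21 | exact l22
  · rintro h2
    have h2' : (t - 1) * (t + 1) = 0 := by linear_combination h2
    rw [Submodule.ne_bot_iff]
    rcases mul_eq_zero.mp h2' with h | h
    · have ht1 : t = 1 := by linear_combination h
      refine ⟨BB (0, 1) - BB (1, 0), ?_, ?_⟩
      · rw [LinearMap.mem_ker, map_sub, LinearMap.add_apply, LinearMap.add_apply,
          LinearMap.id_apply, LinearMap.id_apply, h12, h21, ht1]
        module
      · intro h0
        have := congrArg (fun w => BB.repr w (0, 1)) h0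
        simp [Finsupp.single_apply] at this
    · have ht1 : t = -1 := by linear_combination h
      refine ⟨BB (0, 0), ?_, BB.ne_zero _⟩
      rw [LinearMap.mem_ker, LinearMap.add_apply, LinearMap.id_apply, h11, ht1]
      module
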